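/- Let n ≥ 2, m ≥ 2 be integers and 0 < p ≤ 1. Suppose nonnegative reals θ_V, θ_H, τ_H satisfy θ_V ≤ θ_H ≤ τ_H ≤ 1 and τ_H ≤ (2 m p θ_V + (2m−1)(p² τ_H + 2 p (1−p) θ_H))^n. Then either τ_H = 0 or τ_H ≥ (4m)^{−n/(n−1)}. -/
import Mathlib


/-- the key quantitative inequality. If `0 ≤ θ_V ≤ θ_H ≤ τ_H ≤ 1` and
`τ_H ≤ (2mp θ_V + (2m-1)(p² τ_H + 2p(1-p) θ_H))^n`, then `τ_H = 0` or
`τ_H ≥ (4m)^{-n/(n-1)}`. -/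
theorem stmt_11 (n m : ℕ) (hn : 2 ≤ n) (hm : 2 ≤ m) (p : ℝ) (hp0 : 0 < p) (hp1 : p ≤ 1)
    (θV θH τH : ℝ) (h0 : 0 ≤ θV) (h1 : θV ≤ θH) (h2 : θH ≤ τH) (h3 : τH ≤ 1)
    (hineq : τH ≤ (2 * m * p * θV +
      (2 * m - 1) * (p ^ 2 * τH + 2 * p * (1 - p) * θH)) ^ n) :
    τH = 0 ∨ (4 * (m : ℝ)) ^ (-(n : ℝ) / ((n : ℝ) - 1)) ≤ τH := by
  rcases eq_or_lt_of_le (le_trans (le_trans h0 h1) h2) with hτ | hτ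
  · exact Or.inl hτ.symm
  right
  have hm2 : (2:ℝ) ≤ (m:ℝ) := by exact_mod_cast hm
  have hn2 : (2:ℝ) ≤ (n:ℝ) := by exact_mod_cast hn
  set c : ℝ := 4 * (m:ℝ) with hc
  have hcpos : 0 < c := by positivity
  have hτV : θV ≤ τH := le_trans h1 h2
  have hstuff0 : 0 ≤ 2 * m * p * θV + (2 * m - 1) * (p ^ 2 * τH + 2 * p * (1 - p) * θH) := by
    have h2m1 : (0:ℝ) ≤ 2 * m - 1 := by nlinarith
    have hθH0 : 0 ≤ θH := le_trans h0 h1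
    have : (0:ℝ) ≤ 1 - p := by linarith
    positivity
  have hbound : 2 * m * p * θV + (2 * m - 1) * (p ^ 2 * τH + 2 * p * (1 - p) * θH)
      ≤ c * τH := by
    have h2m1 : (0:ℝ) ≤ 2 * (m:ℝ) - 1 := by linarith
    have hpθ : p * θV ≤ τH := by nlinarith
    have hA : 2 * (m:ℝ) * (p * θV) ≤ 2 * (m:ℝ) * τH :=
      mul_le_mul_of_nonneg_left hpθ (by linarith)
    have hX : p ^ 2 * τH + 2 * p * (1 - p) * θH ≤ τH := by
      nlinarith [mul_nonneg (mul_nonneg (mul_nonneg (by norm_num : (0:ℝ) ≤ 2) hp0.le)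
        (sub_nonneg.2 hp1)) (sub_nonneg.2 h2),
        mul_nonneg (sq_nonneg (1 - p)) hτ.le]
    have hB : (2 * (m:ℝ) - 1) * (p ^ 2 * τH + 2 * p * (1 - p) * θH)
        ≤ (2 * (m:ℝ) - 1) * τH := mul_le_mul_of_nonneg_left hX h2m1
    have : c * τH = 4 * (m:ℝ) * τH := by rw [hc]
    nlinarith
  have hkey : τH ≤ c ^ n * τH ^ n := by
    calc τH ≤ (2 * m * p * θV + (2 * m - 1) * (p ^ 2 * τH + 2 * p * (1 - p) * θH)) ^ n := hineq
    _ ≤ (c * τH) ^ n := pow_le_pow_left₀ hstuff0 hbound n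
    _ = c ^ n * τH ^ n := mul_pow c τH n
  have hpow : 1 ≤ c ^ n * τH ^ (n - 1) := by
    have h : 1 * τH ≤ (c ^ n * τH ^ (n - 1)) * τH := by
      have : τH ^ (n - 1) * τH = τH ^ n := by
        rw [← pow_succ, Nat.sub_add_cancel (by omega)]
      rw [one_mul, mul_assoc, this]
      exact hkey
    exact le_of_mul_le_mul_right h hτ
  have hcn : (0:ℝ) < c ^ n := pow_pos hcpos n
  have hinv : (c ^ n)⁻¹ ≤ τH ^ (n - 1) := by
    rw [inv_le_iff_one_le_mul₀ hcn]
    linarith [hpow]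
  have hcast : ((n - 1 : ℕ) : ℝ) = (n:ℝ) - 1 := by
    rw [Nat.cast_sub (by omega)]; norm_num
  have hrpow : c ^ (-(n:ℝ)) ≤ τH ^ ((n:ℝ) - 1) := by
    rw [Real.rpow_neg hcpos.le, Real.rpow_natCast, ← hcast, Real.rpow_natCast]
    exact hinv
  have hne : (n:ℝ) - 1 ≠ 0 := by linarith
  have hexp : (0:ℝ) ≤ 1 / ((n:ℝ) - 1) := one_div_nonneg.2 (by linarith)
  have hfin := Real.rpow_le_rpow (Real.rpow_nonneg hcpos.le _) hrpow hexp
  rw [← Real.rpow_mul hcpos.le, ← Real.rpow_mul (le_trans (le_trans h0 h1) h2)] at hfin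
  have e1 : -(n:ℝ) * (1 / ((n:ℝ) - 1)) = -(n:ℝ) / ((n:ℝ) - 1) := by ring
  have e2 : ((n:ℝ) - 1) * (1 / ((n:ℝ) - 1)) = 1 := by field_simp
  rwa [e1, e2, Real.rpow_one] at hfin
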